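/- Let I ⊆ ℝ∖{0} be an open interval. (a) Let β ∈ ℂ be fixed, let A ⊆ ℝ be an open interval of parameter values α, and let u₁, u₂, v₁, v₂ : I × A → ℂ be twice continuously differentiable functions such that for each α ∈ A, the functions s ↦ uₖ(s,α), vₖ(s,α) satisfy the coupled Painlevé V system with parameters (α, β) on I. Then with H = H(s,α) the Hamiltonian, for all (s,α) ∈ I × A: ∂/∂α [u₁·∂v₁/∂s + u₂·∂v₂/∂s − H] = ∂/∂s [u₁·∂v₁/∂α + u₂·∂v₂/∂α] + (u₁(v₁²−1) + u₂(v₂²−1))/s. (b) Symmetrically, let α ∈ ℂ be fixed, let B ⊆ ℝ be an open interval of parameter values β, and let u₁, u₂, v₁, v₂ : I × B → ℂ be twice continuously differentiable such that for each β ∈ B the functions satisfy the coupled Painlevé V system with parameters (α, β) on I. Then for all (s,β) ∈ I × B: ∂/∂β [u₁·∂v₁/∂s + u₂·∂v₂/∂s − H] = ∂/∂s [u₁·∂v₁/∂β + u₂·∂v₂/∂β] + (u₁(v₁−1)² + u₂(v₂−1)²)/s. -/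

import Mathlib

open Complex Filter Topology MeasureTheory

/-- Right-hand side of the `u₁`-equation of the coupled Painlevé V system in
dimension four: `s·u₁′ = (s/2)u₁ − u₁²(v₁−1)(3v₁−1) − u₁u₂(v₂−1)(2v₁+v₂−1)
+ 2(α+β)u₁v₁ − 2βu₁`. -/
noncomputable def cpvRHSu₁ (α β s u₁ u₂ v₁ v₂ : ℂ) : ℂ :=
  (s / 2) * u₁ - u₁ ^ 2 * (v₁ - 1) * (3 * v₁ - 1)
    - u₁ * u₂ * (v₂ - 1) * (2 * v₁ + v₂ - 1) + 2 * (α + β) * u₁ * v₁ - 2 * β * u₁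

/-- Right-hand side of the `u₂`-equation of the coupled Painlevé V system. -/
noncomputable def cpvRHSu₂ (α β s u₁ u₂ v₁ v₂ : ℂ) : ℂ :=
  -(s / 2) * u₂ - u₂ ^ 2 * (v₂ - 1) * (3 * v₂ - 1)
    - u₁ * u₂ * (v₁ - 1) * (v₁ + 2 * v₂ - 1) + 2 * (α + β) * u₂ * v₂ - 2 * β * u₂

/-- Right-hand side of the `v₁`-equation of the coupled Painlevé V system. -/
noncomputable def cpvRHSv₁ (α β s u₁ u₂ v₁ v₂ : ℂ) : ℂ :=
  -(s / 2) * v₁ + 2 * u₁ * v₁ * (v₁ - 1) ^ 2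
    + u₂ * (v₁ + v₂) * (v₁ - 1) * (v₂ - 1) - α * (v₁ ^ 2 - 1) - β * (v₁ - 1) ^ 2

/-- Right-hand side of the `v₂`-equation of the coupled Painlevé V system. -/
noncomputable def cpvRHSv₂ (α β s u₁ u₂ v₁ v₂ : ℂ) : ℂ :=
  (s / 2) * v₂ + 2 * u₂ * v₂ * (v₂ - 1) ^ 2
    + u₁ * (v₁ + v₂) * (v₁ - 1) * (v₂ - 1) - α * (v₂ ^ 2 - 1) - β * (v₂ - 1) ^ 2

/-- `s·H` for the coupled Painlevé V system: `s·H = u₁²v₁(v₁−1)² + u₂²v₂(v₂−1)²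
− (s/2)(u₁v₁ − u₂v₂) − α(u₁(v₁²−1) + u₂(v₂²−1)) − β(u₁(v₁−1)² + u₂(v₂−1)²)
+ u₁u₂(v₁+v₂)(v₁−1)(v₂−1)`. -/
noncomputable def cpvSH (α β s u₁ u₂ v₁ v₂ : ℂ) : ℂ :=
  u₁ ^ 2 * v₁ * (v₁ - 1) ^ 2 + u₂ ^ 2 * v₂ * (v₂ - 1) ^ 2
    - (s / 2) * (u₁ * v₁ - u₂ * v₂)
    - α * (u₁ * (v₁ ^ 2 - 1) + u₂ * (v₂ ^ 2 - 1))
    - β * (u₁ * (v₁ - 1) ^ 2 + u₂ * (v₂ - 1) ^ 2)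
    + u₁ * u₂ * (v₁ + v₂) * (v₁ - 1) * (v₂ - 1)

/-- The Hamiltonian `H` of the coupled Painlevé V system, defined by `s·H = cpvSH`. -/
noncomputable def cpvH (α β s u₁ u₂ v₁ v₂ : ℂ) : ℂ := cpvSH α β s u₁ u₂ v₁ v₂ / s

/-- `(u₁, u₂, v₁, v₂)` is a solution of the coupled Painlevé V system in dimension
four with parameters `(α, β)` on a set `I ⊆ ℝ` of (nonzero) real values of `s`. -/
def IsCPVSolutionOn (α β : ℂ) (I : Set ℝ) (u₁ u₂ v₁ v₂ : ℝ → ℂ) : Prop :=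
  ∀ s ∈ I,
    DifferentiableAt ℝ u₁ s ∧ DifferentiableAt ℝ u₂ s ∧
    DifferentiableAt ℝ v₁ s ∧ DifferentiableAt ℝ v₂ s ∧
    (s : ℂ) * deriv u₁ s = cpvRHSu₁ α β s (u₁ s) (u₂ s) (v₁ s) (v₂ s) ∧
    (s : ℂ) * deriv u₂ s = cpvRHSu₂ α β s (u₁ s) (u₂ s) (v₁ s) (v₂ s) ∧
    (s : ℂ) * deriv v₁ s = cpvRHSv₁ α β s (u₁ s) (u₂ s) (v₁ s) (v₂ s) ∧
    (s : ℂ) * deriv v₂ s = cpvRHSv₂ α β s (u₁ s) (u₂ s) (v₁ s) (v₂ s)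

/-- `(u₁, u₂, v₁, v₂)`, as functions of `t > 0`, form a solution of the coupled
Painlevé V system with parameters `(α, β)` on the negative imaginary ray
`s = −it`, `t > 0`, where `d/ds` is interpreted as `i·d/dt`. -/
def IsCPVSolutionNegIm (α β : ℂ) (u₁ u₂ v₁ v₂ : ℝ → ℂ) : Prop :=
  ∀ t : ℝ, 0 < t →
    DifferentiableAt ℝ u₁ t ∧ DifferentiableAt ℝ u₂ t ∧
    DifferentiableAt ℝ v₁ t ∧ DifferentiableAt ℝ v₂ t ∧
    (-Complex.I * t) * (Complex.I * deriv u₁ t)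
      = cpvRHSu₁ α β (-Complex.I * t) (u₁ t) (u₂ t) (v₁ t) (v₂ t) ∧
    (-Complex.I * t) * (Complex.I * deriv u₂ t)
      = cpvRHSu₂ α β (-Complex.I * t) (u₁ t) (u₂ t) (v₁ t) (v₂ t) ∧
    (-Complex.I * t) * (Complex.I * deriv v₁ t)
      = cpvRHSv₁ α β (-Complex.I * t) (u₁ t) (u₂ t) (v₁ t) (v₂ t) ∧
    (-Complex.I * t) * (Complex.I * deriv v₂ t)
      = cpvRHSv₂ α β (-Complex.I * t) (u₁ t) (u₂ t) (v₁ t) (v₂ t)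

private theorem HasDerivAt.csq {f : ℝ → ℂ} {f' : ℂ} {x : ℝ} (h : HasDerivAt f f' x) :
    HasDerivAt (fun y => f y ^ 2) (2 * f x * f') x := by
  have h2 : HasDerivAt (fun y => f y * f y) (2 * f x * f') x := by
    have h3 := h.mul h
    rwa [show f' * f x + f x * f' = 2 * f x * f' by ring] at h3
  exact h2.congr_of_eventuallyEq (by filter_upwards with y; rw [pow_two])

private lemma curry_hasDerivAt_snd {f : ℝ → ℝ → ℂ} {U : Set (ℝ × ℝ)}
    (hU : IsOpen U) (hf : ContDiffOn ℝ 2 (fun p : ℝ × ℝ => f p.1 p.2) U)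
    {s a : ℝ} (hp : (s, a) ∈ U) :
    HasDerivAt (fun a' => f s a')
      (fderiv ℝ (fun p : ℝ × ℝ => f p.1 p.2) (s, a) (0, 1)) a := by
  have hd : DifferentiableAt ℝ (fun p : ℝ × ℝ => f p.1 p.2) (s, a) :=
    (hf.contDiffAt (hU.mem_nhds hp)).differentiableAt (by norm_num)
  exact hd.hasFDerivAt.comp_hasDerivAt a ((hasDerivAt_const a s).prodMk (hasDerivAt_id a))

private lemma mixed_partials {f : ℝ → ℝ → ℂ} {U : Set (ℝ × ℝ)}
    (hU : IsOpen U) (hf : ContDiffOn ℝ 2 (fun p : ℝ × ℝ => f p.1 p.2) U)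
    {s a : ℝ} (hp : (s, a) ∈ U) :
    ∃ m : ℂ, HasDerivAt (fun a' => deriv (fun s' => f s' a') s) m a ∧
      HasDerivAt (fun s' => deriv (fun a' => f s' a') a) m s := by
  set F := fun p : ℝ × ℝ => f p.1 p.2 with hFdef
  have hdiff : ∀ q ∈ U, DifferentiableAt ℝ F q := fun q hq =>
    (hf.contDiffAt (hU.mem_nhds hq)).differentiableAt (by norm_num)
  have hev : ∀ᶠ q in 𝓝 ((s, a) : ℝ × ℝ), HasFDerivAt F (fderiv ℝ F q) q := by
    filter_upwards [hU.mem_nhds hp] with q hq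
    exact (hdiff q hq).hasFDerivAt
  have hf' : ContDiffOn ℝ 1 (fderiv ℝ F) U := hf.fderiv_of_isOpen hU (by norm_num)
  have hd' : DifferentiableAt ℝ (fderiv ℝ F) (s, a) :=
    ((hf'.differentiableOn one_ne_zero).differentiableAt (hU.mem_nhds hp))
  set f'' := fderiv ℝ (fderiv ℝ F) (s, a) with hf''def
  have hsymm := second_derivative_symmetric_of_eventually hev hd'.hasFDerivAt
  refine ⟨f'' (0, 1) (1, 0), ?_, ?_⟩
  · have hc : HasDerivAt (fun a' => fderiv ℝ F (s, a')) (f'' (0, 1)) a :=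
      hd'.hasFDerivAt.comp_hasDerivAt a ((hasDerivAt_const a s).prodMk (hasDerivAt_id a))
    have h1 : HasDerivAt (fun a' => fderiv ℝ F (s, a') ((1 : ℝ), (0 : ℝ)))
        (f'' (0, 1) (1, 0)) a :=
      (ContinuousLinearMap.apply ℝ ℂ ((1 : ℝ), (0 : ℝ))).hasFDerivAt.comp_hasDerivAt a hc
    refine h1.congr_of_eventuallyEq ?_
    have hmem : ∀ᶠ a' in 𝓝 a, ((s, a') : ℝ × ℝ) ∈ U :=
      ((continuous_const.prodMk continuous_id).continuousAt).preimage_mem_nhds (hU.mem_nhds hp)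
    filter_upwards [hmem] with a' ha'
    exact ((hdiff _ ha').hasFDerivAt.comp_hasDerivAt s
      ((hasDerivAt_id s).prodMk (hasDerivAt_const s a'))).deriv
  · have hc : HasDerivAt (fun s' => fderiv ℝ F (s', a)) (f'' (1, 0)) s :=
      hd'.hasFDerivAt.comp_hasDerivAt s ((hasDerivAt_id s).prodMk (hasDerivAt_const s a))
    have h1 : HasDerivAt (fun s' => fderiv ℝ F (s', a) ((0 : ℝ), (1 : ℝ)))
        (f'' (1, 0) (0, 1)) s :=
      (ContinuousLinearMap.apply ℝ ℂ ((0 : ℝ), (1 : ℝ))).hasFDerivAt.comp_hasDerivAt s hc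
    rw [hsymm (1, 0) (0, 1)] at h1
    refine h1.congr_of_eventuallyEq ?_
    have hmem : ∀ᶠ s' in 𝓝 s, ((s', a) : ℝ × ℝ) ∈ U :=
      ((continuous_id.prodMk continuous_const).continuousAt).preimage_mem_nhds (hU.mem_nhds hp)
    filter_upwards [hmem] with s' hs'
    exact ((hdiff _ hs').hasFDerivAt.comp_hasDerivAt a
      ((hasDerivAt_const a s').prodMk (hasDerivAt_id a))).deriv

private lemma cpv_core {I A : Set ℝ} (hIo : IsOpen I) (hI0 : (0 : ℝ) ∉ I) (hAo : IsOpen A)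
    (u₁ u₂ v₁ v₂ : ℝ → ℝ → ℂ)
    (hu₁ : ContDiffOn ℝ 2 (fun p : ℝ × ℝ => u₁ p.1 p.2) (I ×ˢ A))
    (hu₂ : ContDiffOn ℝ 2 (fun p : ℝ × ℝ => u₂ p.1 p.2) (I ×ˢ A))
    (hv₁ : ContDiffOn ℝ 2 (fun p : ℝ × ℝ => v₁ p.1 p.2) (I ×ˢ A))
    (hv₂ : ContDiffOn ℝ 2 (fun p : ℝ × ℝ => v₂ p.1 p.2) (I ×ˢ A))
    (αf βf : ℝ → ℂ) {dα dβ : ℂ}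
    (hsol : ∀ a ∈ A, IsCPVSolutionOn (αf a) (βf a) I
      (fun s => u₁ s a) (fun s => u₂ s a) (fun s => v₁ s a) (fun s => v₂ s a))
    {s a : ℝ} (hs : s ∈ I) (ha : a ∈ A)
    (hαf : HasDerivAt αf dα a) (hβf : HasDerivAt βf dβ a) :
    deriv (fun a' : ℝ =>
        u₁ s a' * deriv (fun s' : ℝ => v₁ s' a') s
          + u₂ s a' * deriv (fun s' : ℝ => v₂ s' a') s
          - cpvH (αf a') (βf a') (s : ℂ) (u₁ s a') (u₂ s a') (v₁ s a') (v₂ s a')) a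
      = deriv (fun s' : ℝ =>
          u₁ s' a * deriv (fun a' : ℝ => v₁ s' a') a
            + u₂ s' a * deriv (fun a' : ℝ => v₂ s' a') a) s
        + (dα * (u₁ s a * ((v₁ s a) ^ 2 - 1) + u₂ s a * ((v₂ s a) ^ 2 - 1))
            + dβ * (u₁ s a * (v₁ s a - 1) ^ 2 + u₂ s a * (v₂ s a - 1) ^ 2)) / (s : ℂ) := by
  have hUo : IsOpen (I ×ˢ A) := hIo.prod hAo
  have hpU : ((s, a) : ℝ × ℝ) ∈ I ×ˢ A := ⟨hs, ha⟩
  have hs0 : (s : ℂ) ≠ 0 := Complex.ofReal_ne_zero.2 (fun h => hI0 (h ▸ hs))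
  obtain ⟨u₁', hU₁a⟩ : ∃ d, HasDerivAt (fun a' => u₁ s a') d a :=
    ⟨_, curry_hasDerivAt_snd hUo hu₁ hpU⟩
  obtain ⟨u₂', hU₂a⟩ : ∃ d, HasDerivAt (fun a' => u₂ s a') d a :=
    ⟨_, curry_hasDerivAt_snd hUo hu₂ hpU⟩
  obtain ⟨v₁', hV₁a⟩ : ∃ d, HasDerivAt (fun a' => v₁ s a') d a :=
    ⟨_, curry_hasDerivAt_snd hUo hv₁ hpU⟩
  obtain ⟨v₂', hV₂a⟩ : ∃ d, HasDerivAt (fun a' => v₂ s a') d a :=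
    ⟨_, curry_hasDerivAt_snd hUo hv₂ hpU⟩
  obtain ⟨m₁, hm₁a, hm₁s⟩ := mixed_partials hUo hv₁ hpU
  obtain ⟨m₂, hm₂a, hm₂s⟩ := mixed_partials hUo hv₂ hpU
  obtain ⟨hdu₁, hdu₂, hdv₁, hdv₂, he₁, he₂, he₃, he₄⟩ := hsol a ha s hs
  have e₁ : deriv (fun s' => u₁ s' a) s
      = cpvRHSu₁ (αf a) (βf a) s (u₁ s a) (u₂ s a) (v₁ s a) (v₂ s a) / s := by
    rw [eq_div_iff hs0, mul_comm]; exact he₁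
  have e₂ : deriv (fun s' => u₂ s' a) s
      = cpvRHSu₂ (αf a) (βf a) s (u₁ s a) (u₂ s a) (v₁ s a) (v₂ s a) / s := by
    rw [eq_div_iff hs0, mul_comm]; exact he₂
  have e₃ : deriv (fun s' => v₁ s' a) s
      = cpvRHSv₁ (αf a) (βf a) s (u₁ s a) (u₂ s a) (v₁ s a) (v₂ s a) / s := by
    rw [eq_div_iff hs0, mul_comm]; exact he₃
  have e₄ : deriv (fun s' => v₂ s' a) s
      = cpvRHSv₂ (αf a) (βf a) s (u₁ s a) (u₂ s a) (v₁ s a) (v₂ s a) / s := by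
    rw [eq_div_iff hs0, mul_comm]; exact he₄
  -- chain rule for s·H as a function of the parameter
  have hSH := (((((((hU₁a.csq).mul hV₁a).mul ((hV₁a.sub_const 1).csq)).add
      (((hU₂a.csq).mul hV₂a).mul ((hV₂a.sub_const 1).csq))).sub
      ((hasDerivAt_const a ((s : ℂ) / 2)).mul ((hU₁a.mul hV₁a).sub (hU₂a.mul hV₂a)))).sub
      (hαf.mul ((hU₁a.mul ((hV₁a.csq).sub_const 1)).add
        (hU₂a.mul ((hV₂a.csq).sub_const 1))))).sub
      (hβf.mul ((hU₁a.mul ((hV₁a.sub_const 1).csq)).add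
        (hU₂a.mul ((hV₂a.sub_const 1).csq))))).add
      ((((hU₁a.mul hU₂a).mul (hV₁a.add hV₂a)).mul (hV₁a.sub_const 1)).mul (hV₂a.sub_const 1))
  have hΦ := ((hU₁a.mul hm₁a).add (hU₂a.mul hm₂a)).sub (hSH.div_const (s : ℂ))
  have hΨ := (hdu₁.hasDerivAt.mul hm₁s).add (hdu₂.hasDerivAt.mul hm₂s)
  simp only [cpvH, cpvSH]
  simp only [Pi.mul_def, Pi.add_def, Pi.sub_def] at hΦ hΨ
  rw [hΦ.deriv, hΨ.deriv]
  simp only [hV₁a.deriv, hV₂a.deriv, e₁, e₂, e₃, e₄]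
  simp only [cpvRHSu₁, cpvRHSu₂, cpvRHSv₁, cpvRHSv₂]
  field_simp
  ring

/-- Differential identities for the classical action of the coupled Painlevé V
system with respect to the parameters. (a) For a two-parameter-smooth family of
solutions depending on the parameter `α` (with `β` fixed),
`∂/∂α[u₁ ∂v₁/∂s + u₂ ∂v₂/∂s − H] = ∂/∂s[u₁ ∂v₁/∂α + u₂ ∂v₂/∂α]
+ (u₁(v₁²−1) + u₂(v₂²−1))/s`; (b) symmetrically for the parameter `β` (with `α`
fixed), with extra term `(u₁(v₁−1)² + u₂(v₂−1)²)/s`. -/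
theorem cpv_action_parameter_differential_identities :
    (∀ (β : ℂ) (I A : Set ℝ), IsOpen I → I.OrdConnected → (0 : ℝ) ∉ I →
      IsOpen A → A.OrdConnected →
      ∀ u₁ u₂ v₁ v₂ : ℝ → ℝ → ℂ,
      ContDiffOn ℝ 2 (fun p : ℝ × ℝ => u₁ p.1 p.2) (I ×ˢ A) →
      ContDiffOn ℝ 2 (fun p : ℝ × ℝ => u₂ p.1 p.2) (I ×ˢ A) →
      ContDiffOn ℝ 2 (fun p : ℝ × ℝ => v₁ p.1 p.2) (I ×ˢ A) →
      ContDiffOn ℝ 2 (fun p : ℝ × ℝ => v₂ p.1 p.2) (I ×ˢ A) →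
      (∀ a ∈ A, IsCPVSolutionOn (a : ℂ) β I
        (fun s => u₁ s a) (fun s => u₂ s a) (fun s => v₁ s a) (fun s => v₂ s a)) →
      ∀ s ∈ I, ∀ a ∈ A,
        deriv (fun a' : ℝ =>
            u₁ s a' * deriv (fun s' : ℝ => v₁ s' a') s
              + u₂ s a' * deriv (fun s' : ℝ => v₂ s' a') s
              - cpvH (a' : ℂ) β (s : ℂ) (u₁ s a') (u₂ s a') (v₁ s a') (v₂ s a')) a
          = deriv (fun s' : ℝ =>
              u₁ s' a * deriv (fun a' : ℝ => v₁ s' a') a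
                + u₂ s' a * deriv (fun a' : ℝ => v₂ s' a') a) s
            + (u₁ s a * ((v₁ s a) ^ 2 - 1) + u₂ s a * ((v₂ s a) ^ 2 - 1))
                / (s : ℂ)) ∧
    (∀ (α : ℂ) (I B : Set ℝ), IsOpen I → I.OrdConnected → (0 : ℝ) ∉ I →
      IsOpen B → B.OrdConnected →
      ∀ u₁ u₂ v₁ v₂ : ℝ → ℝ → ℂ,
      ContDiffOn ℝ 2 (fun p : ℝ × ℝ => u₁ p.1 p.2) (I ×ˢ B) →
      ContDiffOn ℝ 2 (fun p : ℝ × ℝ => u₂ p.1 p.2) (I ×ˢ B) →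
      ContDiffOn ℝ 2 (fun p : ℝ × ℝ => v₁ p.1 p.2) (I ×ˢ B) →
      ContDiffOn ℝ 2 (fun p : ℝ × ℝ => v₂ p.1 p.2) (I ×ˢ B) →
      (∀ b ∈ B, IsCPVSolutionOn α (b : ℂ) I
        (fun s => u₁ s b) (fun s => u₂ s b) (fun s => v₁ s b) (fun s => v₂ s b)) →
      ∀ s ∈ I, ∀ b ∈ B,
        deriv (fun b' : ℝ =>
            u₁ s b' * deriv (fun s' : ℝ => v₁ s' b') s
              + u₂ s b' * deriv (fun s' : ℝ => v₂ s' b') s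
              - cpvH α (b' : ℂ) (s : ℂ) (u₁ s b') (u₂ s b') (v₁ s b') (v₂ s b')) b
          = deriv (fun s' : ℝ =>
              u₁ s' b * deriv (fun b' : ℝ => v₁ s' b') b
                + u₂ s' b * deriv (fun b' : ℝ => v₂ s' b') b) s
            + (u₁ s b * ((v₁ s b) - 1) ^ 2 + u₂ s b * ((v₂ s b) - 1) ^ 2)
                / (s : ℂ)) := by
  constructor
  · intro β I A hIo _ hI0 hAo _ u₁ u₂ v₁ v₂ hu₁ hu₂ hv₁ hv₂ hsol s hs a ha
    have h1 : HasDerivAt (fun a' : ℝ => (a' : ℂ)) 1 a := by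
      simpa using (hasDerivAt_id a).ofReal_comp
    have hkey := cpv_core hIo hI0 hAo u₁ u₂ v₁ v₂ hu₁ hu₂ hv₁ hv₂
      (fun a' : ℝ => (a' : ℂ)) (fun _ => β) hsol hs ha h1 (hasDerivAt_const a β)
    rw [hkey]; ring
  · intro α I B hIo _ hI0 hBo _ u₁ u₂ v₁ v₂ hu₁ hu₂ hv₁ hv₂ hsol s hs b hb
    have h1 : HasDerivAt (fun b' : ℝ => (b' : ℂ)) 1 b := by
      simpa using (hasDerivAt_id b).ofReal_comp
    have hkey := cpv_core hIo hI0 hBo u₁ u₂ v₁ v₂ hu₁ hu₂ hv₁ hv₂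
      (fun _ => α) (fun b' : ℝ => (b' : ℂ)) hsol hs hb (hasDerivAt_const b α) h1
    rw [hkey]; ring
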